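/- arXiv:2509.04192 — 3 statements merged into one kernel-verified Lean document; each statement's English description precedes it below -/
import Mathlib

section
/- Let $\mathbf{W}_n$ be the set of $\sigma$-structures with domain $[n]$ for a finite relational language $\sigma$ with $r$ relation symbols of maximal arity $\rho$, so $|\mathbf{W}_n| \leq 2^{r n^{\rho}}$. Let $\varphi(x_1,\ldots,x_\nu)$ be a formula, $w > 0$, and define the measure $\mu_n(\mathcal{A}) = 2^{w|\varphi(\mathcal{A})|}$ where $|\varphi(\mathcal{A})|$ is the number of $\nu$-tuples satisfying $\varphi$ in $\mathcal{A}$, and $\mathbb{P}_n(\mathbf{X}) = \mu_n(\mathbf{X})/\mu_n(\mathbf{W}_n)$. Let $\mathbf{Y}_n^t = \{\mathcal{A} \in \mathbf{W}_n : |\neg\varphi(\mathcal{A})| \leq t\}$ and $f(n) = rn^{\rho}/w$. If $|\mathbf{Y}_n^0| \geq 2^{cn}$ for some $c > 0$ and all sufficiently large $n$, then for all sufficiently large $n$, $\mathbb{P}_n(\mathbf{Y}_n^{f(n)}) \geq 1 - 2^{-cn}$. -/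
open scoped Classical

/-- MLN with one soft constraint `φ` of arity `ν` and weight `w > 0`, over a language with
`r` relation symbols of maximal arity `ρ`.  For each domain size `n`, `W n` is the (finite)
set of possible worlds, with `|W n| ≤ 2^{r n^ρ}`; `sat n A` is the number `|φ(A)|` of
`ν`-tuples satisfying `φ` in `A` (so `sat n A ≤ n^ν` and the number of violating tuples is
`n^ν - sat n A`).  The MLN weight is `μ(A) = 2^{w · sat A}` and `P_n(X) = μ(X)/μ(W n)`.
If `|Y_n^0| = |{A : sat A = n^ν}| ≥ 2^{cn}` for some `c > 0` and all large `n`, then for all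
large `n` the set `Y_n^{f(n)}` with `f(n) = r n^ρ / w` has probability at least `1 - 2^{-cn}`. -/
theorem mln_concentrates_on_few_violations
    (r ρ ν : ℕ) (w c : ℝ) (hw : 0 < w) (hc : 0 < c)
    (W : ℕ → Type) [∀ n, Fintype (W n)]
    (sat : ∀ n, W n → ℕ)
    (hsat : ∀ n (a : W n), sat n a ≤ n ^ ν)
    (hWcard : ∀ n : ℕ, (Fintype.card (W n) : ℝ) ≤ (2 : ℝ) ^ ((r : ℝ) * (n : ℝ) ^ ρ))
    (hY0 : ∀ᶠ n : ℕ in Filter.atTop,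
      (2 : ℝ) ^ (c * n) ≤
        ((Finset.univ.filter (fun a : W n => sat n a = n ^ ν)).card : ℝ)) :
    ∀ᶠ n : ℕ in Filter.atTop,
      1 - (2 : ℝ) ^ (-(c * n)) ≤
        (∑ a ∈ Finset.univ.filter
            (fun a : W n => ((n ^ ν - sat n a : ℕ) : ℝ) ≤ (r : ℝ) * (n : ℝ) ^ ρ / w),
            (2 : ℝ) ^ (w * sat n a)) /
          (∑ a : W n, (2 : ℝ) ^ (w * sat n a)) := by
  filter_upwards [hY0] with n hn
  set N : ℝ := ((n ^ ν : ℕ) : ℝ) with hN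
  set R : ℝ := (r : ℝ) * (n : ℝ) ^ ρ with hR
  set T : ℝ := ∑ a : W n, (2 : ℝ) ^ (w * sat n a) with hT
  set p : W n → Prop := fun a => ((n ^ ν - sat n a : ℕ) : ℝ) ≤ R / w with hp
  have hpos : ∀ a : W n, (0 : ℝ) < (2 : ℝ) ^ (w * sat n a) :=
    fun a => Real.rpow_pos_of_pos two_pos _
  -- lower bound for T
  have hTlb : (2 : ℝ) ^ (c * n + w * N) ≤ T := by
    have h1 : (2 : ℝ) ^ (c * n) * (2 : ℝ) ^ (w * N)
        ≤ ((Finset.univ.filter (fun a : W n => sat n a = n ^ ν)).card : ℝ)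
            * (2 : ℝ) ^ (w * N) :=
      mul_le_mul_of_nonneg_right hn (Real.rpow_pos_of_pos two_pos _).le
    have h2 : ((Finset.univ.filter (fun a : W n => sat n a = n ^ ν)).card : ℝ)
        * (2 : ℝ) ^ (w * N)
        = ∑ a ∈ Finset.univ.filter (fun a : W n => sat n a = n ^ ν),
            (2 : ℝ) ^ (w * sat n a) := by
      rw [Finset.sum_congr rfl (fun a ha => ?_), Finset.sum_const, nsmul_eq_mul]
      rw [Finset.mem_filter] at ha
      rw [ha.2, hN]
    have h3 : ∑ a ∈ Finset.univ.filter (fun a : W n => sat n a = n ^ ν),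
        (2 : ℝ) ^ (w * sat n a) ≤ T :=
      Finset.sum_le_sum_of_subset_of_nonneg (Finset.subset_univ _)
        (fun a _ _ => (hpos a).le)
    calc (2 : ℝ) ^ (c * n + w * N) = (2 : ℝ) ^ (c * n) * (2 : ℝ) ^ (w * N) :=
          Real.rpow_add two_pos _ _
      _ ≤ _ := h1.trans (h2.le.trans h3)
  -- upper bound for complement sum
  have hSc : ∑ a ∈ Finset.univ.filter (fun a => ¬ p a), (2 : ℝ) ^ (w * sat n a)
      ≤ (2 : ℝ) ^ (w * N) := by
    have heach : ∀ a ∈ Finset.univ.filter (fun a : W n => ¬ p a),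
        (2 : ℝ) ^ (w * sat n a) ≤ (2 : ℝ) ^ (w * N - R) := by
      intro a ha
      rw [Finset.mem_filter, hp] at ha
      have hlt : R / w < ((n ^ ν - sat n a : ℕ) : ℝ) := lt_of_not_ge ha.2
      rw [Nat.cast_sub (hsat n a)] at hlt
      have : R < w * (N - (sat n a : ℝ)) := by
        rw [div_lt_iff₀ hw] at hlt; linarith [hlt]
      have hexp : w * (sat n a : ℝ) ≤ w * N - R := by nlinarith
      exact Real.rpow_le_rpow_of_exponent_le one_le_two hexp
    calc ∑ a ∈ Finset.univ.filter (fun a => ¬ p a), (2 : ℝ) ^ (w * sat n a)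
        ≤ ∑ _a ∈ Finset.univ.filter (fun a : W n => ¬ p a), (2 : ℝ) ^ (w * N - R) :=
          Finset.sum_le_sum heach
      _ = ((Finset.univ.filter (fun a : W n => ¬ p a)).card : ℝ) * (2 : ℝ) ^ (w * N - R) := by
          rw [Finset.sum_const, nsmul_eq_mul]
      _ ≤ (2 : ℝ) ^ R * (2 : ℝ) ^ (w * N - R) := by
          apply mul_le_mul_of_nonneg_right _ (Real.rpow_pos_of_pos two_pos _).le
          refine le_trans ?_ (hWcard n)
          exact_mod_cast Nat.cast_le.mpr (Finset.card_le_card (Finset.subset_univ _)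
            |>.trans_eq (Finset.card_univ))
      _ = (2 : ℝ) ^ (w * N) := by
          rw [← Real.rpow_add two_pos]; ring_nf
  have hTpos : 0 < T := lt_of_lt_of_le (Real.rpow_pos_of_pos two_pos _) hTlb
  have hsplit : (∑ a ∈ Finset.univ.filter p, (2 : ℝ) ^ (w * sat n a))
      + ∑ a ∈ Finset.univ.filter (fun a => ¬ p a), (2 : ℝ) ^ (w * sat n a) = T :=
    Finset.sum_filter_add_sum_filter_not _ _ _
  have hScT : (∑ a ∈ Finset.univ.filter (fun a => ¬ p a), (2 : ℝ) ^ (w * sat n a)) / T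
      ≤ (2 : ℝ) ^ (-(c * n)) := by
    have h1 : (∑ a ∈ Finset.univ.filter (fun a => ¬ p a), (2 : ℝ) ^ (w * sat n a)) / T
        ≤ (2 : ℝ) ^ (w * N) / (2 : ℝ) ^ (c * n + w * N) :=
      div_le_div₀ (Real.rpow_pos_of_pos two_pos _).le hSc
        (Real.rpow_pos_of_pos two_pos _) hTlb
    refine h1.trans_eq ?_
    rw [← Real.rpow_sub two_pos]; ring_nf
  have key : 1 - (2 : ℝ) ^ (-(c * n))
      ≤ (∑ a ∈ Finset.univ.filter p, (2 : ℝ) ^ (w * sat n a)) / T := by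
    have : (∑ a ∈ Finset.univ.filter p, (2 : ℝ) ^ (w * sat n a)) / T
        = 1 - (∑ a ∈ Finset.univ.filter (fun a => ¬ p a), (2 : ℝ) ^ (w * sat n a)) / T := by
      field_simp
      linarith [hsplit]
    rw [this]
    linarith [hScT]
  exact key
end

section
/- Consider the probability distribution on subsets $M \subseteq [n]$ where the weight of $M$ is $2^{|M|^2 + (n-|M|)^2}$ (and probability is weight divided by total weight over all subsets). Then the probability that $M = \emptyset$ tends to $1/2$ and the probability that $M = [n]$ tends to $1/2$ as $n \to \infty$. -/
open Filter Finset

private lemma key_exp {n c : ℕ} (hc : 1 ≤ c) (hcn : c < n) :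
    c ^ 2 + (n - c) ^ 2 ≤ n ^ 2 - (2 * n - 2) := by
  obtain ⟨d, rfl⟩ : ∃ d, n = c + d + 1 := ⟨n - c - 1, by omega⟩
  obtain ⟨c', rfl⟩ : ∃ c', c = c' + 1 := ⟨c - 1, by omega⟩
  have h1 : (c' + 1 + d + 1) - (c' + 1) = d + 1 := by omega
  rw [h1]
  have h2 : (c' + 1 + d + 1) ^ 2 = (c' + 1) ^ 2 + (d + 1) ^ 2 + (2 * (c' + 1 + d + 1) - 2) + 2 * c' * d := by
    have : 2 * (c' + 1 + d + 1) - 2 = 2 * c' + 2 * d + 2 := by omega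
    rw [this]; ring
  omega

/-- In the weighted distribution on subsets `M ⊆ [n]` with weight `2^{|M|² + (n-|M|)²}`,
the probability that `M = ∅` tends to `1/2` and the probability that `M = [n]` tends to
`1/2` as `n → ∞`. -/
theorem weighted_subsets_concentrate_on_empty_and_full :
    Filter.Tendsto (fun n : ℕ =>
      (2 : ℝ) ^ ((∅ : Finset (Fin n)).card ^ 2 + (n - (∅ : Finset (Fin n)).card) ^ 2) /
        ∑ M : Finset (Fin n), (2 : ℝ) ^ (M.card ^ 2 + (n - M.card) ^ 2))
      Filter.atTop (nhds (1 / 2)) ∧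
    Filter.Tendsto (fun n : ℕ =>
      (2 : ℝ) ^ ((Finset.univ : Finset (Fin n)).card ^ 2 +
          (n - (Finset.univ : Finset (Fin n)).card) ^ 2) /
        ∑ M : Finset (Fin n), (2 : ℝ) ^ (M.card ^ 2 + (n - M.card) ^ 2))
      Filter.atTop (nhds (1 / 2)) := by
  set S : ℕ → ℝ := fun n => ∑ M : Finset (Fin n), (2 : ℝ) ^ (M.card ^ 2 + (n - M.card) ^ 2)
    with hS
  -- lower bound: for n ≥ 1, 2 * 2^(n^2) ≤ S n
  have hlow : ∀ n : ℕ, 1 ≤ n → 2 * (2 : ℝ) ^ (n ^ 2) ≤ S n := by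
    intro n hn
    have hne : (∅ : Finset (Fin n)) ≠ Finset.univ := by
      simp [Finset.eq_univ_iff_forall]
      exact ⟨0, by omega⟩
    have hsub : ({∅, Finset.univ} : Finset (Finset (Fin n))) ⊆ Finset.univ :=
      Finset.subset_univ _
    have := Finset.sum_le_sum_of_subset_of_nonneg hsub
      (fun M _ _ => by positivity :
        ∀ M ∈ (Finset.univ : Finset (Finset (Fin n))),
          M ∉ ({∅, Finset.univ} : Finset (Finset (Fin n))) →
          (0:ℝ) ≤ (2 : ℝ) ^ (M.card ^ 2 + (n - M.card) ^ 2))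
    rw [Finset.sum_pair hne] at this
    simpa [two_mul] using this
  -- upper bound
  have hup : ∀ n : ℕ, 2 ≤ n →
      S n ≤ 2 * (2 : ℝ) ^ (n ^ 2) + 2 ^ n * (2 : ℝ) ^ (n ^ 2 - (2 * n - 2)) := by
    intro n hn
    have hne : (∅ : Finset (Fin n)) ≠ Finset.univ := by
      simp [Finset.eq_univ_iff_forall]
      exact ⟨0, by omega⟩
    set T : Finset (Finset (Fin n)) := {∅, Finset.univ} with hT
    have hsplit : S n = (∑ M ∈ Finset.univ \ T, (2 : ℝ) ^ (M.card ^ 2 + (n - M.card) ^ 2))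
        + ∑ M ∈ T, (2 : ℝ) ^ (M.card ^ 2 + (n - M.card) ^ 2) := by
      rw [hS]
      exact (Finset.sum_sdiff (Finset.subset_univ T)).symm
    have hTsum : ∑ M ∈ T, (2 : ℝ) ^ (M.card ^ 2 + (n - M.card) ^ 2)
        = 2 * (2 : ℝ) ^ (n ^ 2) := by
      rw [hT, Finset.sum_pair hne]
      simp [two_mul]
    have hbound : ∀ M ∈ Finset.univ \ T,
        (2 : ℝ) ^ (M.card ^ 2 + (n - M.card) ^ 2) ≤ (2 : ℝ) ^ (n ^ 2 - (2 * n - 2)) := by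
      intro M hM
      simp only [Finset.mem_sdiff, hT, Finset.mem_insert, Finset.mem_singleton] at hM
      push_neg at hM
      obtain ⟨-, hM1, hM2⟩ := hM
      have hc1 : 1 ≤ M.card := Finset.one_le_card.mpr hM1
      have hc2 : M.card < n := by
        have : M ⊂ Finset.univ := (Finset.subset_univ M).ssubset_of_ne hM2
        have := Finset.card_lt_card this
        simpa using this
      exact pow_le_pow_right₀ one_le_two (key_exp hc1 hc2)
    have hcard : ((Finset.univ \ T).card : ℝ) ≤ 2 ^ n := by
      have h1 : (Finset.univ \ T).card ≤ (Finset.univ : Finset (Finset (Fin n))).card :=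
        Finset.card_le_card (Finset.sdiff_subset)
      have h2 : (Finset.univ : Finset (Finset (Fin n))).card = 2 ^ n := by
        simp [Finset.card_univ]
      calc ((Finset.univ \ T).card : ℝ) ≤ ((2:ℕ) ^ n : ℕ) := by exact_mod_cast h2 ▸ h1
        _ = 2 ^ n := by push_cast; ring
    have hrest : (∑ M ∈ Finset.univ \ T, (2 : ℝ) ^ (M.card ^ 2 + (n - M.card) ^ 2))
        ≤ 2 ^ n * (2 : ℝ) ^ (n ^ 2 - (2 * n - 2)) := by
      calc (∑ M ∈ Finset.univ \ T, (2 : ℝ) ^ (M.card ^ 2 + (n - M.card) ^ 2))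
          ≤ (Finset.univ \ T).card • (2 : ℝ) ^ (n ^ 2 - (2 * n - 2)) :=
            Finset.sum_le_card_nsmul _ _ _ hbound
        _ = ((Finset.univ \ T).card : ℝ) * (2 : ℝ) ^ (n ^ 2 - (2 * n - 2)) := by
            rw [nsmul_eq_mul]
        _ ≤ 2 ^ n * (2 : ℝ) ^ (n ^ 2 - (2 * n - 2)) := by
            apply mul_le_mul_of_nonneg_right hcard (by positivity)
    rw [hsplit, hTsum]
    linarith
  have hpos : ∀ n : ℕ, 0 < S n :=
    fun n => Finset.sum_pos (fun M _ => by positivity) ⟨∅, Finset.mem_univ _⟩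
  -- ratio tends to 2
  have hr : Tendsto (fun n => S n / (2 : ℝ) ^ (n ^ 2)) atTop (nhds 2) := by
    have hupper : Tendsto (fun n : ℕ => 2 + 4 * (1/2 : ℝ) ^ n) atTop (nhds 2) := by
      have h0 : Tendsto (fun n : ℕ => (1/2 : ℝ) ^ n) atTop (nhds 0) :=
        tendsto_pow_atTop_nhds_zero_of_lt_one (by norm_num) (by norm_num)
      have := (tendsto_const_nhds (x := (2:ℝ))).add (h0.const_mul 4)
      simpa using this
    apply tendsto_of_tendsto_of_tendsto_of_le_of_le' tendsto_const_nhds hupper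
    · filter_upwards [eventually_ge_atTop 1] with n hn
      rw [le_div_iff₀ (by positivity)]
      linarith [hlow n hn]
    · filter_upwards [eventually_ge_atTop 2] with n hn
      rw [div_le_iff₀ (by positivity)]
      have heq : (2 : ℝ) ^ n * (2 : ℝ) ^ (n ^ 2 - (2 * n - 2)) = 4 * (1/2 : ℝ) ^ n * 2 ^ (n ^ 2) := by
        have h2n : 2 * n ≤ n ^ 2 := by nlinarith
        have h : 2 * n - 2 ≤ n ^ 2 := le_trans (Nat.sub_le _ _) h2n
        obtain ⟨m, hm⟩ := Nat.exists_eq_add_of_le h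
        rw [hm]
        have h1 : 2 * n - 2 + m - (2 * n - 2) = m := by omega
        have h4 : (4:ℝ) = 2 ^ (2:ℕ) := by norm_num
        rw [h1, one_div, inv_pow, h4]
        field_simp
        rw [← pow_mul, ← pow_add]
        congr 1
        rw [← pow_add]; congr 1; omega
      calc S n ≤ 2 * (2 : ℝ) ^ (n ^ 2) + 2 ^ n * (2 : ℝ) ^ (n ^ 2 - (2 * n - 2)) := hup n hn
        _ = (2 + 4 * (1/2 : ℝ) ^ n) * 2 ^ (n ^ 2) := by rw [heq]; ring
  have hmain : Tendsto (fun n : ℕ => (2 : ℝ) ^ (n ^ 2) / S n) atTop (nhds (1/2)) := by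
    have := hr.inv₀ (by norm_num)
    simp only [inv_div] at this
    convert this using 2
    norm_num
  constructor
  · convert hmain using 2 with n
    simp [hS]
  · convert hmain using 2 with n
    simp [hS]
end

section
/- With $F_i$ as above, the map $F_i$ restricted to graphs on $[n]$ of maximum degree at most $\Delta$ is at most $2^{\binom{2\Delta+3}{2}}$-to-one; hence $|F_i(\Omega_n^\Delta)| \geq |\Omega_n^\Delta| / 2^{\binom{2\Delta+3}{2}}$, where $\Omega_n^\Delta$ is the set of graphs on $[n]$ with maximum degree at most $\Delta$. -/
/-- The first `Δ + 2` vertices of `Fin n` different from `i`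
(assuming `n ≥ Δ + 3`). -/
def firstVerts (n Δ : ℕ) (i : Fin n) : Set (Fin n) :=
  {v | v ≠ i ∧ (v : ℕ) < Δ + 2 + (if (i : ℕ) < Δ + 2 then 1 else 0)}

/-- The graph `F_i(G)` obtained from `G` by adding all edges between `i` and the first
`Δ + 2` vertices different from `i`. -/
def addEdges (n Δ : ℕ) (i : Fin n) (G : SimpleGraph (Fin n)) : SimpleGraph (Fin n) where
  Adj a b := a ≠ b ∧ (G.Adj a b ∨ (a = i ∧ b ∈ firstVerts n Δ i) ∨
    (b = i ∧ a ∈ firstVerts n Δ i))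
  symm := by
    constructor
    intro a b ⟨hne, h⟩
    refine ⟨hne.symm, ?_⟩
    rcases h with h | h | h
    · exact Or.inl (G.adj_symm h)
    · exact Or.inr (Or.inr h)
    · exact Or.inr (Or.inl h)
  loopless := by constructor; intro a ⟨hne, _⟩; exact hne rfl

lemma addEdges_neighborSet (n Δ : ℕ) (i : Fin n) (G : SimpleGraph (Fin n)) :
    (addEdges n Δ i G).neighborSet i = G.neighborSet i ∪ firstVerts n Δ i := by
  ext b
  simp only [SimpleGraph.mem_neighborSet, addEdges, Set.mem_union]
  constructor
  · rintro ⟨hne, h | h | h⟩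
    · exact Or.inl h
    · exact Or.inr h.2
    · exact absurd h.1.symm hne
  · rintro (h | h)
    · exact ⟨G.ne_of_adj h, Or.inl h⟩
    · refine ⟨fun e => h.1 e.symm, ?_⟩
      tauto

lemma addEdges_inj_aux (n Δ : ℕ) (i : Fin n) (G G' : SimpleGraph (Fin n))
    (h : addEdges n Δ i G = addEdges n Δ i G')
    (hN : G.neighborSet i = G'.neighborSet i) : G = G' := by
  have hAdj : ∀ b, G.Adj i b ↔ G'.Adj i b := by
    intro b
    have := Set.ext_iff.mp hN b
    simpa [SimpleGraph.mem_neighborSet] using this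
  ext a b
  by_cases ha : a = i
  · subst ha; exact hAdj b
  by_cases hb : b = i
  · subst hb
    rw [SimpleGraph.adj_comm, hAdj a, SimpleGraph.adj_comm]
  · have h' : (addEdges n Δ i G).Adj a b ↔ (addEdges n Δ i G').Adj a b := by rw [h]
    simp only [addEdges, ha, hb, false_and, or_false] at h'
    constructor
    · intro hg; exact (h'.mp ⟨G.ne_of_adj hg, hg⟩).2
    · intro hg; exact (h'.mpr ⟨G'.ne_of_adj hg, hg⟩).2

lemma firstVerts_ncard (n Δ : ℕ) (i : Fin n) : (firstVerts n Δ i).ncard ≤ Δ + 3 := by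
  have hsub : firstVerts n Δ i ⊆ {v : Fin n | (v : ℕ) < Δ + 3} := by
    intro v hv
    have h2 := hv.2
    have h3 : (if (i : ℕ) < Δ + 2 then 1 else 0) ≤ 1 := by split <;> norm_num
    have : (v : ℕ) < Δ + 3 := by omega
    exact this
  have h2 : {v : Fin n | (v : ℕ) < Δ + 3}.ncard ≤ (Set.Iio (Δ + 3)).ncard := by
    exact Set.ncard_le_ncard_of_injOn (fun v : Fin n => (v : ℕ)) (fun v hv => hv)
      (fun a _ b _ hab => Fin.val_injective hab) (Set.finite_Iio _)
  have h3 : (Set.Iio (Δ + 3)).ncard = Δ + 3 := by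
    rw [← Finset.coe_Iio, Set.ncard_coe_finset, Nat.card_Iio]
  calc (firstVerts n Δ i).ncard ≤ {v : Fin n | (v : ℕ) < Δ + 3}.ncard :=
        Set.ncard_le_ncard hsub (Set.toFinite _)
    _ ≤ Δ + 3 := by omega

lemma choose_bound (Δ : ℕ) : 2 * Δ + 3 ≤ Nat.choose (2 * Δ + 3) 2 := by
  rw [Nat.choose_two_right]
  rw [show 2 * Δ + 3 - 1 = 2 * (Δ + 1) from by omega]
  rw [show (2 * Δ + 3) * (2 * (Δ + 1)) = ((2 * Δ + 3) * (Δ + 1)) * 2 from by ring,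
    Nat.mul_div_cancel _ (by norm_num)]
  exact Nat.le_mul_of_pos_right _ (by omega)

lemma fiber_bound (Δ n : ℕ) (hΔ : 1 ≤ Δ) (i : Fin n) (H : SimpleGraph (Fin n)) :
    {G : SimpleGraph (Fin n) | (∀ v, (G.neighborSet v).ncard ≤ Δ) ∧ addEdges n Δ i G = H}.ncard
      ≤ 2 ^ (Nat.choose (2 * Δ + 3) 2) := by
  classical
  set s := {G : SimpleGraph (Fin n) | (∀ v, (G.neighborSet v).ncard ≤ Δ) ∧
    addEdges n Δ i G = H} with hs_def
  rcases Set.eq_empty_or_nonempty s with hs | ⟨G₀, hG₀⟩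
  · simp [hs]
  · have hH : H.neighborSet i = G₀.neighborSet i ∪ firstVerts n Δ i := by
      rw [← hG₀.2]; exact addEdges_neighborSet n Δ i G₀
    have hcard : (H.neighborSet i).ncard ≤ 2 * Δ + 3 := by
      rw [hH]
      calc (G₀.neighborSet i ∪ firstVerts n Δ i).ncard
          ≤ (G₀.neighborSet i).ncard + (firstVerts n Δ i).ncard := Set.ncard_union_le _ _
        _ ≤ Δ + (Δ + 3) := Nat.add_le_add (hG₀.1 i) (firstVerts_ncard n Δ i)
        _ = 2 * Δ + 3 := by ring
    set N : Finset (Fin n) := (H.neighborSet i).toFinite.toFinset with hN_def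
    have hNcard : N.card ≤ 2 * Δ + 3 := by
      rwa [← Set.ncard_eq_toFinset_card (H.neighborSet i) (Set.toFinite _)]
    have hmain : s.ncard ≤ (↑N.powerset : Set (Finset (Fin n))).ncard := by
      apply Set.ncard_le_ncard_of_injOn (fun G => (G.neighborSet i).toFinite.toFinset)
      · intro G hG
        simp only [Finset.mem_coe, Finset.mem_powerset]
        rw [Set.Finite.toFinset_subset_toFinset]
        rw [← hG.2, addEdges_neighborSet]
        exact Set.subset_union_left
      · intro G hG G' hG' hEq
        refine addEdges_inj_aux n Δ i G G' (hG.2.trans hG'.2.symm) ?_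
        exact Set.Finite.toFinset_inj.mp hEq
    rw [Set.ncard_coe_finset, Finset.card_powerset] at hmain
    calc s.ncard ≤ 2 ^ N.card := hmain
      _ ≤ 2 ^ (2 * Δ + 3) := Nat.pow_le_pow_right (by norm_num) hNcard
      _ ≤ 2 ^ (Nat.choose (2 * Δ + 3) 2) := Nat.pow_le_pow_right (by norm_num) (choose_bound Δ)

/-- The map `F_i` restricted to the set `Ω` of graphs on `[n]` of maximum degree at most
`Δ` is at most `2^{C(2Δ+3, 2)}`-to-one; hence `|F_i(Ω)| ≥ |Ω| / 2^{C(2Δ+3,2)}`. -/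
theorem addEdges_almost_injective (Δ n : ℕ) (hΔ : 1 ≤ Δ) (hn : Δ + 3 ≤ n) (i : Fin n) :
    let Ω : Set (SimpleGraph (Fin n)) := {G | ∀ v, (G.neighborSet v).ncard ≤ Δ}
    (∀ H : SimpleGraph (Fin n),
      {G ∈ Ω | addEdges n Δ i G = H}.ncard ≤ 2 ^ (Nat.choose (2 * Δ + 3) 2)) ∧
    Ω.ncard ≤ ((addEdges n Δ i) '' Ω).ncard * 2 ^ (Nat.choose (2 * Δ + 3) 2) := by
  classical
  intro Ω
  have key : ∀ H : SimpleGraph (Fin n),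
      {G ∈ Ω | addEdges n Δ i G = H}.ncard ≤ 2 ^ (Nat.choose (2 * Δ + 3) 2) := by
    intro H
    exact fiber_bound Δ n hΔ i H
  refine ⟨key, ?_⟩
  have hfin : Ω.Finite := Set.toFinite _
  set sF : Finset (SimpleGraph (Fin n)) := hfin.toFinset with hsF_def
  have hcard : sF.card ≤ 2 ^ (Nat.choose (2 * Δ + 3) 2) * (sF.image (addEdges n Δ i)).card := by
    apply Finset.card_le_mul_card_image
    intro b _
    have : (↑({a ∈ sF | addEdges n Δ i a = b}) : Set (SimpleGraph (Fin n)))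
        = {G ∈ Ω | addEdges n Δ i G = b} := by
      ext G
      simp [hsF_def, Set.Finite.mem_toFinset, Ω]
    calc ({a ∈ sF | addEdges n Δ i a = b}).card
        = {G ∈ Ω | addEdges n Δ i G = b}.ncard := by rw [← this, Set.ncard_coe_finset]
      _ ≤ 2 ^ (Nat.choose (2 * Δ + 3) 2) := key b
  have h1 : Ω.ncard = sF.card := Set.ncard_eq_toFinset_card Ω hfin
  have h2 : ((addEdges n Δ i) '' Ω).ncard = (sF.image (addEdges n Δ i)).card := by
    rw [← Set.ncard_coe_finset, Finset.coe_image, Set.Finite.coe_toFinset]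
  rw [h1, h2, mul_comm]
  exact hcard
end
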